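/- Let F be a free group and L₁, L₂ ⊆ F nonempty subsets with at least two elements each, and u ∈ F, such that L₁·{u}·L₂ ⊆ v·⟨p⟩ for some v, p ∈ F. Then there exist u₀, u₁, u₂ ∈ F with L₁·{u}·L₂ = {u₀}·L₂·{u₁}·L₁·{u₂}. -/

import Mathlib

open scoped Pointwise

/-- An element `p` of a free group is primitive if it is nontrivial and its only
roots are `p` itself and `p⁻¹`. -/
def IsPrimitiveElt {A : Type*} (p : FreeGroup A) : Prop :=
  p ≠ 1 ∧ ∀ (w : FreeGroup A) (l : ℤ), w ^ l = p → w = p ∨ w = p⁻¹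

/-- The coset `v·⟨p⟩ = {v * p^k : k ∈ ℤ}`. -/
def coset {A : Type*} (v p : FreeGroup A) : Set (FreeGroup A) :=
  {x | ∃ k : ℤ, x = v * p ^ k}

/-- A free group element is cyclically reduced if its reduced word does not begin
and end with mutually inverse letters. -/
def CyclicallyReduced {A : Type*} [DecidableEq A] (w : FreeGroup A) : Prop :=
  ∀ x y : A × Bool, w.toWord.head? = some x → w.toWord.getLast? = some y →
    ¬(x.1 = y.1 ∧ x.2 = !y.2)

theorem stmt9 {A : Type*} (L₁ L₂ : Set (FreeGroup A))
    (h₁ : ∃ x ∈ L₁, ∃ y ∈ L₁, x ≠ y) (h₂ : ∃ x ∈ L₂, ∃ y ∈ L₂, x ≠ y)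
    (u v p : FreeGroup A)
    (h : ∀ a ∈ L₁, ∀ b ∈ L₂, a * u * b ∈ coset v p) :
    ∃ u₀ u₁ u₂ : FreeGroup A,
      {x | ∃ a ∈ L₁, ∃ b ∈ L₂, x = a * u * b} =
        {x | ∃ b ∈ L₂, ∃ a ∈ L₁, x = u₀ * b * u₁ * a * u₂} := by
  obtain ⟨a₀, ha₀, -⟩ := h₁
  obtain ⟨b₀, hb₀, -⟩ := h₂
  refine ⟨a₀ * u, (a₀ * u * b₀)⁻¹, u * b₀, ?_⟩
  have key : ∀ a ∈ L₁, ∀ b ∈ L₂,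
      a * u * b = a₀ * u * b * (a₀ * u * b₀)⁻¹ * a * (u * b₀) := by
    intro a ha b hb
    obtain ⟨s, hs⟩ := h a ha b₀ hb₀
    obtain ⟨t, ht⟩ := h a₀ ha₀ b hb
    obtain ⟨r, hr⟩ := h a₀ ha₀ b₀ hb₀
    have comm : v * p ^ s * (v * p ^ r)⁻¹ * (v * p ^ t)
        = v * p ^ t * (v * p ^ r)⁻¹ * (v * p ^ s) := by
      rw [mul_inv_rev]
      calc v * p ^ s * ((p ^ r)⁻¹ * v⁻¹) * (v * p ^ t)
          = v * (p ^ s * (p ^ r)⁻¹ * p ^ t) := by group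
        _ = v * p ^ (s + -r + t) := by rw [← zpow_neg, ← zpow_add, ← zpow_add]
        _ = v * p ^ (t + -r + s) := by congr 1; ring
        _ = v * (p ^ t * (p ^ r)⁻¹ * p ^ s) := by rw [← zpow_neg, ← zpow_add, ← zpow_add]
        _ = v * p ^ t * ((p ^ r)⁻¹ * v⁻¹) * (v * p ^ s) := by group
    calc a * u * b = (a * u * b₀) * (a₀ * u * b₀)⁻¹ * (a₀ * u * b) := by group
      _ = v * p ^ s * (v * p ^ r)⁻¹ * (v * p ^ t) := by rw [hs, ht, hr]
      _ = v * p ^ t * (v * p ^ r)⁻¹ * (v * p ^ s) := comm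
      _ = (a₀ * u * b) * (a₀ * u * b₀)⁻¹ * (a * u * b₀) := by rw [hs, ht, hr]
      _ = a₀ * u * b * (a₀ * u * b₀)⁻¹ * a * (u * b₀) := by group
  ext x
  constructor
  · rintro ⟨a, ha, b, hb, rfl⟩
    exact ⟨b, hb, a, ha, key a ha b hb⟩
  · rintro ⟨b, hb, a, ha, rfl⟩
    exact ⟨a, ha, b, hb, (key a ha b hb).symm⟩
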